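/- Let Λ = diag(λ^{(1)},...,λ^{(d)}) with λ^{(1)} > ... > λ^{(i)} > 0 distinct positive top-i entries. Consider the iteration on ν ∈ ℝ^d given by Δ(ν)^{(p)} = −m·λ̄·ν^{(p)} for p < i and Δ(ν)^{(p)} = (λ^{(p)} − m·λ̄)·ν^{(p)} for p ≥ i, where m = ‖ν‖² and λ̄ = (νᵀΛν)/m. Then ν = ±e_i (the i-th standard basis vector) is a stationary point, and it is the unique stable stationary point: at any stationary point, ν^{(p)} = 0 for p < i, and if ν^{(i)} ≠ 0 then ν = ±e_i. -/

import Mathlib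

open Matrix

private lemma qform_eq (d : ℕ) (lam : Fin d → ℝ) (ν : Fin d → ℝ) :
    ν ⬝ᵥ (Matrix.diagonal lam).mulVec ν = ∑ j, ν j * (lam j * ν j) := by
  simp [dotProduct, Matrix.mulVec_diagonal]

/-- Coordinate form of the GHA-GEP update with exact parents: ±e_i is the unique
stable stationary point. -/
theorem stmt15 (d : ℕ) (i : Fin d) (lam : Fin d → ℝ)
    (hstrict : ∀ j l : Fin d, j < l → l ≤ i → lam l < lam j)
    (hpos : 0 < lam i)
    (htop : ∀ p : Fin d, i < p → lam p < lam i) :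
    let Δ : (Fin d → ℝ) → (Fin d → ℝ) := fun ν p =>
      if p < i then
        -((ν ⬝ᵥ ν) * ((ν ⬝ᵥ (Matrix.diagonal lam).mulVec ν) / (ν ⬝ᵥ ν))) * ν p
      else
        (lam p - (ν ⬝ᵥ ν) * ((ν ⬝ᵥ (Matrix.diagonal lam).mulVec ν) / (ν ⬝ᵥ ν))) * ν p
    Δ (Pi.single i 1) = 0 ∧ Δ (-(Pi.single i 1)) = 0 ∧
    ∀ ν : Fin d → ℝ, Δ ν = 0 →
      (∀ p : Fin d, p < i → ν p = 0) ∧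
      (ν i ≠ 0 → ν = Pi.single i 1 ∨ ν = -(Pi.single i 1)) := by
  intro Δ
  have hm1 : (Pi.single i 1 : Fin d → ℝ) ⬝ᵥ Pi.single i 1 = 1 := by
    simp [dotProduct, Pi.single_apply]
  have hq1 : (Pi.single i 1 : Fin d → ℝ) ⬝ᵥ
      (Matrix.diagonal lam).mulVec (Pi.single i 1) = lam i := by
    rw [qform_eq]
    simp [Pi.single_apply]
  have hfix : Δ (Pi.single i 1) = 0 := by
    funext p
    by_cases hp : p < i
    · have hne : p ≠ i := ne_of_lt hp
      simp [Δ, hp, Pi.single_apply, hne]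
    · by_cases hpi : p = i
      · subst hpi
        simp [Δ, hp, hm1, hq1]
      · simp [Δ, hp, Pi.single_apply, hpi]
  refine ⟨hfix, ?_, ?_⟩
  · -- negative case
    have : Δ (-(Pi.single i 1)) = fun p => - Δ (Pi.single i 1) p := by
      funext p
      simp only [Δ, Matrix.mulVec_neg, neg_dotProduct, dotProduct_neg,
        neg_neg, Pi.neg_apply]
      by_cases hp : p < i <;> simp [hp] <;> ring
    rw [this, hfix]
    funext p; simp
  · intro ν hν
    by_cases hm : ν ⬝ᵥ ν = 0
    · have hν0 : ν = 0 := by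
        rwa [dotProduct_self_eq_zero] at hm
      subst hν0
      exact ⟨fun p _ => rfl, fun h => absurd rfl h⟩
    · set q : ℝ := ν ⬝ᵥ (Matrix.diagonal lam).mulVec ν with hqdef
      have hM : (ν ⬝ᵥ ν) * (q / (ν ⬝ᵥ ν)) = q := by
        field_simp
      have hcoord : ∀ p : Fin d,
          (if p < i then -q * ν p else (lam p - q) * ν p) = 0 := by
        intro p
        have := congrFun hν p
        simp only [Δ, ← hqdef, hM, Pi.zero_apply] at this
        by_cases hp : p < i <;> simpa [hp] using this
      have hlow : ∀ p : Fin d, p < i → q * ν p = 0 := by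
        intro p hp
        have := hcoord p
        rw [if_pos hp] at this
        linarith [this]
      have hhigh : ∀ p : Fin d, ¬ p < i → (lam p - q) * ν p = 0 := by
        intro p hp
        have := hcoord p
        rwa [if_neg hp] at this
      have hlow0 : ∀ p : Fin d, p < i → ν p = 0 := by
        by_cases hq : q = 0
        · -- all terms of q are nonneg, sum is zero
          intro p hp
          have hterm : ∀ j : Fin d, j ∈ Finset.univ → 0 ≤ ν j * (lam j * ν j) := by
            intro j _
            rcases lt_trichotomy j i with hj | hj | hj
            · have hl : 0 < lam j := lt_trans hpos (hstrict j i hj le_rfl)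
              have : ν j * (lam j * ν j) = lam j * (ν j * ν j) := by ring
              rw [this]
              exact mul_nonneg hl.le (mul_self_nonneg _)
            · subst hj
              have : ν j * (lam j * ν j) = lam j * (ν j * ν j) := by ring
              rw [this]
              exact mul_nonneg hpos.le (mul_self_nonneg _)
            · have := hhigh j (not_lt.mpr hj.le)
              rw [hq, sub_zero] at this
              rcases mul_eq_zero.mp this with h | h
              · simp [h]
              · simp [h]
          have hsum : ∑ j, ν j * (lam j * ν j) = 0 := by
            rw [← qform_eq, ← hqdef, hq]
          have hall := (Finset.sum_eq_zero_iff_of_nonneg hterm).mp hsum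
          have hp0 := hall p (Finset.mem_univ p)
          have hl : 0 < lam p := lt_trans hpos (hstrict p i hp le_rfl)
          have : lam p * (ν p * ν p) = 0 := by linarith [hp0]
          have := (mul_eq_zero.mp this).resolve_left (ne_of_gt hl)
          exact mul_self_eq_zero.mp this
        · intro p hp
          have := hlow p hp
          exact (mul_eq_zero.mp this).resolve_left hq
      refine ⟨hlow0, ?_⟩
      intro hνi
      have hqi : q = lam i := by
        have := hhigh i (lt_irrefl i)
        rcases mul_eq_zero.mp this with h | h
        · linarith
        · exact absurd h hνi
      have hzero : ∀ j : Fin d, j ≠ i → ν j = 0 := by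
        intro j hj
        rcases lt_or_gt_of_ne hj with hji | hji
        · exact hlow0 j hji
        · have := hhigh j (not_lt.mpr hji.le)
          rcases mul_eq_zero.mp this with h | h
          · exfalso
            have := htop j hji
            rw [hqi] at h
            linarith
          · exact h
      have hqsingle : q = ν i * (lam i * ν i) := by
        rw [hqdef, qform_eq]
        rw [Finset.sum_eq_single i]
        · intro j _ hj
          rw [hzero j hj]; ring
        · intro h; exact absurd (Finset.mem_univ i) h
      have hsq : ν i * ν i = 1 := by
        have : lam i = lam i * (ν i * ν i) := by
          have h := hqsingle
          rw [hqi] at h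
          nth_rewrite 1 [h]
          ring
        have h2 : lam i * (ν i * ν i - 1) = 0 := by linarith [this]
        have := (mul_eq_zero.mp h2).resolve_left (ne_of_gt hpos)
        linarith
      rcases mul_self_eq_one_iff.mp hsq with h1 | h1
      · left
        funext j
        by_cases hj : j = i
        · subst hj; simp [h1]
        · rw [hzero j hj, Pi.single_apply, if_neg hj]
      · right
        funext j
        by_cases hj : j = i
        · subst hj; simp [h1]
        · rw [hzero j hj]
          simp [Pi.single_apply, hj]
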